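/- Let $A$ be a reduced Noetherian ring, $\mathfrak{p} \subset A$ a minimal prime ideal, and $\psi: \mathfrak{p} \to A/\mathfrak{p}$ an $A$-module homomorphism. Then $\psi = 0$. -/

import Mathlib

/-- **Lemma.** Let `A` be a reduced Noetherian ring, `p ⊆ A` a minimal prime ideal and
`ψ : p → A/p` an `A`-module homomorphism. Then `ψ = 0`. -/
theorem hom_minimal_prime_to_quotient_eq_zero
    (A : Type*) [CommRing A] [IsReduced A] [IsNoetherianRing A]
    (p : Ideal A) (hp : p ∈ minimalPrimes A)
    (ψ : p →ₗ[A] A ⧸ p) :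
    ψ = 0 := by
  haveI : p.IsPrime := hp.1.1
  ext ⟨x, hx⟩
  -- image of x in the localization at p is nilpotent, hence zero
  have hnil : IsNilpotent (algebraMap A (Localization p.primeCompl) x) := by
    have hsub := IsLocalization.subsingleton_primeSpectrum_of_mem_minimalPrimes p hp (Localization p.primeCompl)
    have : Ring.KrullDimLE 0 (Localization p.primeCompl) := by
      refine (((Ring.krullDimLE_zero_and_isLocalRing_tfae _).out 1 0 rfl rfl).mp ⟨IsLocalRing.maximalIdeal _, inferInstance, fun J hJ => ?_⟩).1
      exact congrArg PrimeSpectrum.asIdeal (Subsingleton.elim (⟨J, hJ⟩ : PrimeSpectrum _) ⟨_, (IsLocalRing.maximalIdeal.isMaximal _).isPrime⟩)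
    rw [Ring.KrullDimLE.isNilpotent_iff_mem_maximalIdeal]
    rw [IsLocalRing.mem_maximalIdeal]
    intro h
    exact ((IsLocalization.AtPrime.isUnit_to_map_iff
      (Localization p.primeCompl) p x).mp h) hx
  have h0 : algebraMap A (Localization p.primeCompl) x = 0 := hnil.eq_zero
  obtain ⟨s, hs⟩ := (IsLocalization.map_eq_zero_iff p.primeCompl
    (Localization p.primeCompl) x).mp h0
  -- s • x = 0 with s ∉ p
  have hsx : (s : A) • (⟨x, hx⟩ : p) = 0 := Subtype.ext (by simpa [mul_comm] using hs)
  have : (s : A) • ψ ⟨x, hx⟩ = 0 := by rw [← map_smul, hsx, map_zero]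
  rw [LinearMap.zero_apply]
  -- conclude in the domain A/p
  obtain ⟨y, hy⟩ := Ideal.Quotient.mk_surjective (ψ ⟨x, hx⟩)
  rw [← hy] at this ⊢
  have : Ideal.Quotient.mk p ((s : A) * y) = 0 := by
    simpa [Algebra.smul_def, map_mul] using this
  rw [Ideal.Quotient.eq_zero_iff_mem] at this
  rcases (Ideal.IsPrime.mem_or_mem ‹p.IsPrime› this) with h | h
  · exact absurd h s.2
  · exact Ideal.Quotient.eq_zero_iff_mem.mpr h
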